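/- arXiv:2510.00164 — 3 statements merged into one kernel-verified Lean document; each statement's English description precedes it below -/
import Mathlib

section
/- Let α be a type and h : α → α → α such that the uncurried map (x, y) ↦ h x y is injective on α × α. Fix a depth D : ℕ and direction bits dir : Fin D → Bool. Then the Merkle path fold is injective in the leaf value and the sibling values: for all c, c' : α and path, path' : Fin D → α, if pathFold h D c dir path = pathFold h D c' dir path', then c = c' and path = path'. In particular, for a fixed leaf position a Merkle inclusion proof determines the leaf value uniquely. -/
/-- The Merkle path fold: starting from `c`, for `k = 0, …, D-1` in order update
`tmp := h tmp (path k)` if `dir k` and `tmp := h (path k) tmp` otherwise. -/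
def pathFold {α : Type*} (h : α → α → α) (D : ℕ) (c : α)
    (dir : Fin D → Bool) (path : Fin D → α) : α :=
  Fin.foldl D (fun tmp k => if dir k then h tmp (path k) else h (path k) tmp) c

/-- if the uncurried hash is injective on `α × α`, then for fixed
depth `D` and direction bits `dir`, the Merkle path fold is injective in the
leaf value and the sibling values. -/
theorem pathFold_injective {α : Type*} (h : α → α → α)
    (hinj : Function.Injective fun p : α × α => h p.1 p.2)
    (D : ℕ) (dir : Fin D → Bool)
    (c c' : α) (path path' : Fin D → α)
    (heq : pathFold h D c dir path = pathFold h D c' dir path') :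
    c = c' ∧ path = path' := by
  induction D with
  | zero =>
    refine ⟨?_, funext fun k => k.elim0⟩
    simpa [pathFold] using heq
  | succ n ih =>
    unfold pathFold at heq
    rw [Fin.foldl_succ_last, Fin.foldl_succ_last] at heq
    have key : (Fin.foldl n (fun tmp k =>
          if dir k.castSucc then h tmp (path k.castSucc) else h (path k.castSucc) tmp) c,
          path (Fin.last n)) =
        (Fin.foldl n (fun tmp k =>
          if dir k.castSucc then h tmp (path' k.castSucc) else h (path' k.castSucc) tmp) c',
          path' (Fin.last n)) := by
      rcases hd : dir (Fin.last n) with hb | hb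
      · simp only [hd, if_false] at heq
        have := hinj (a₁ := (path (Fin.last n), _)) (a₂ := (path' (Fin.last n), _)) heq
        exact Prod.ext (congrArg Prod.snd this) (congrArg Prod.fst this)
      · simp only [hd, if_true] at heq
        exact hinj heq
    have h1 := congrArg Prod.fst key
    have h2 := congrArg Prod.snd key
    simp only at h1 h2
    obtain ⟨hc, hp⟩ := ih (fun k => dir k.castSucc) (fun k => path k.castSucc)
      (fun k => path' k.castSucc) h1
    refine ⟨hc, funext fun k => ?_⟩
    induction k using Fin.lastCases with
    | last => exact h2
    | cast i => exact congrFun hp i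
end

section
/- Let α be a type, h : α → α → α, D : ℕ, f : Fin (2^D) → α a leaf assignment, and i : Fin (2^D) a leaf index. Define the direction bits dir : Fin D → Bool by dir k = true if and only if the k-th least-significant binary digit of i is 0 (i.e. ¬ Nat.testBit i k). Then there exists a sibling vector path : Fin D → α such that for every v : α, merkleRoot h D (Function.update f i v) = pathFold h D v dir path. In particular, taking v = f i, pathFold h D (f i) dir path = merkleRoot h D f, so every leaf of the tree admits a valid Merkle inclusion proof, and updating a single leaf changes the root only through the same fold with the same sibling vector. -/
/-- The Merkle root of a full binary tree of depth `D` with leaves `f`,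
computed with the two-argument hash `g`. -/
def merkleRoot {α : Type*} (g : α → α → α) : (D : ℕ) → (Fin (2 ^ D) → α) → α
  | 0, f => f 0
  | D + 1, f =>
      have h2 : 2 ^ (D + 1) = 2 ^ D + 2 ^ D := by rw [pow_succ]; omega
      g (merkleRoot g D fun i => f ⟨i.1, by have := i.2; omega⟩)
        (merkleRoot g D fun i => f ⟨2 ^ D + i.1, by have := i.2; omega⟩)

lemma tb1 (D j k : ℕ) (hk : k < D) :
    Nat.testBit (2^D + j) k = Nat.testBit j k := by
  rw [Nat.testBit_eq_decide_div_mod_eq, Nat.testBit_eq_decide_div_mod_eq]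
  have h1 : 2^D = 2^k * (2 * 2^(D-k-1)) := by
    rw [← pow_succ', ← pow_add]; congr 1; omega
  rw [h1, Nat.mul_add_div (by positivity), Nat.mul_add_mod]

lemma tb2 (D j : ℕ) (hj : j < 2^D) : Nat.testBit (2^D + j) D = true := by
  rw [Nat.testBit_eq_decide_div_mod_eq]
  have : (2^D + j) / 2^D = 1 := by
    rw [add_comm, Nat.add_div_right _ (by positivity), Nat.div_eq_of_lt hj]
  simp [this]

lemma pathFold_succ {α : Type*} (h : α → α → α) (D : ℕ) (c : α)
    (dir : Fin (D+1) → Bool) (path : Fin (D+1) → α) :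
    pathFold h (D+1) c dir path =
      (fun tmp (k : Fin (D+1)) => if dir k then h tmp (path k) else h (path k) tmp)
        (pathFold h D c (fun k => dir k.castSucc) (fun k => path k.castSucc))
        (Fin.last D) := by
  unfold pathFold
  rw [Fin.foldl_succ_last]

/-- every leaf position `i` admits a sibling vector `path` such
that, with direction bits `dir k = true ↔ ¬ Nat.testBit i k`, the Merkle root
after updating leaf `i` to any value `v` equals the path fold starting from
`v` along `dir` and `path`; in particular (taking `v = f i`) every leaf has a
valid Merkle inclusion proof. -/
theorem merkleRoot_update_eq_pathFold {α : Type*} (h : α → α → α)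
    (D : ℕ) (f : Fin (2 ^ D) → α) (i : Fin (2 ^ D)) :
    ∃ path : Fin D → α,
      ∀ v : α,
        merkleRoot h D (Function.update f i v) =
          pathFold h D v (fun k => !(Nat.testBit i.1 k.1)) path := by
  induction D with
  | zero =>
    refine ⟨Fin.elim0, fun v => ?_⟩
    have h1 : (0 : Fin (2 ^ 0)) = i := by
      have h2 := i.2
      ext
      simp only [pow_zero] at h2 ⊢
      omega
    show Function.update f i v 0 = _
    rw [h1, Function.update_self]
    simp [pathFold]
  | succ D ih =>
    have hpow : (2:ℕ)^D ≤ 2^(D+1) := Nat.pow_le_pow_right (by norm_num) (by omega)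
    set fL : Fin (2^D) → α := fun j => f ⟨j.1, by have := j.2; omega⟩ with hfL
    set fR : Fin (2^D) → α := fun j => f ⟨2^D + j.1, by have := j.2; omega⟩ with hfR
    by_cases hi : i.1 < 2^D
    · -- left half
      set i' : Fin (2^D) := ⟨i.1, hi⟩ with hi'
      obtain ⟨p', hp'⟩ := ih fL i'
      refine ⟨fun k => if hk : k.1 < D then p' ⟨k.1, hk⟩ else merkleRoot h D fR, fun v => ?_⟩
      have hL : (fun j : Fin (2^D) =>
            Function.update f i v ⟨j.1, by have := j.2; omega⟩) =
            Function.update fL i' v := by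
        funext j
        simp only [Function.update_apply, Fin.ext_iff, hfL, hi']
      have hR : (fun j : Fin (2^D) =>
            Function.update f i v ⟨2^D + j.1, by have := j.2; omega⟩) = fR := by
        funext j
        rw [Function.update_of_ne (by simp [Fin.ext_iff]; omega)]
      show h (merkleRoot h D _) (merkleRoot h D _) = _
      rw [hL, hR, hp' v, pathFold_succ]
      have hd : Nat.testBit i.1 D = false := Nat.testBit_eq_false_of_lt hi
      simp only [Fin.val_last, hd, Bool.not_false, if_true, lt_irrefl, dif_neg]
      congr 1
      · unfold pathFold
        congr 1
        funext tmp k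
        simp only [Fin.coe_castSucc, k.2, dif_pos]
        rfl
    · -- right half
      have hi2 := i.2
      set i' : Fin (2^D) := ⟨i.1 - 2^D, by omega⟩ with hi'
      have hieq : i.1 = 2^D + i'.1 := by simp [hi']; omega
      obtain ⟨p', hp'⟩ := ih fR i'
      refine ⟨fun k => if hk : k.1 < D then p' ⟨k.1, hk⟩ else merkleRoot h D fL, fun v => ?_⟩
      have hL : (fun j : Fin (2^D) =>
            Function.update f i v ⟨j.1, by have := j.2; omega⟩) = fL := by
        funext j
        rw [Function.update_of_ne (by simp [Fin.ext_iff]; have := j.2; omega)]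
      have hR : (fun j : Fin (2^D) =>
            Function.update f i v ⟨2^D + j.1, by have := j.2; omega⟩) =
            Function.update fR i' v := by
        funext j
        simp only [Function.update_apply, Fin.ext_iff, hfR, hi']
        exact if_congr (by omega) rfl rfl
      show h (merkleRoot h D _) (merkleRoot h D _) = _
      rw [hL, hR, hp' v, pathFold_succ]
      have hd : Nat.testBit i.1 D = true := by rw [hieq]; exact tb2 D i'.1 i'.2
      simp only [Fin.val_last, hd, Bool.not_true, if_false, lt_irrefl, dif_neg]
      congr 1
      · unfold pathFold
        congr 1
        · funext tmp k
          have hb : Nat.testBit i.1 k.1 = Nat.testBit i'.1 k.1 := by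
            rw [hieq]; exact tb1 D i'.1 k.1 k.2
          simp only [Fin.coe_castSucc, k.2, dif_pos, hb]
end

section
/- Let α be a type and h : α → α → α. For every depth D : ℕ and leaf assignments f, g : Fin (2^D) → α with f ≠ g, if merkleRoot h D f = merkleRoot h D g, then there exist pairs (x₁, y₁) ≠ (x₂, y₂) in α × α with h x₁ y₁ = h x₂ y₂. That is, any two distinct leaf assignments producing the same Merkle root yield an explicit collision of the underlying two-argument hash function. -/
/-- two distinct leaf assignments with the same Merkle root yield
an explicit collision of the underlying two-argument hash function. -/
theorem merkleRoot_collision_extraction {α : Type*} (h : α → α → α)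
    (D : ℕ) (f g : Fin (2 ^ D) → α) (hfg : f ≠ g)
    (hroot : merkleRoot h D f = merkleRoot h D g) :
    ∃ x₁ y₁ x₂ y₂ : α, (x₁, y₁) ≠ (x₂, y₂) ∧ h x₁ y₁ = h x₂ y₂ := by
  induction D with
  | zero =>
    exact absurd (funext fun i => by
      have : i = 0 := by omega
      simpa [this, merkleRoot] using hroot) hfg
  | succ D ih =>
    set fl : Fin (2 ^ D) → α := fun i => f ⟨i.1, by have := i.2; omega⟩ with hfl
    set fr : Fin (2 ^ D) → α := fun i => f ⟨2 ^ D + i.1, by have := i.2; omega⟩ with hfr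
    set gl : Fin (2 ^ D) → α := fun i => g ⟨i.1, by have := i.2; omega⟩ with hgl
    set gr : Fin (2 ^ D) → α := fun i => g ⟨2 ^ D + i.1, by have := i.2; omega⟩ with hgr
    rw [merkleRoot, merkleRoot] at hroot
    by_cases hpair : (merkleRoot h D fl, merkleRoot h D fr)
        = (merkleRoot h D gl, merkleRoot h D gr)
    · -- subroots agree; recurse on a differing half
      obtain ⟨hL, hR⟩ := Prod.mk.injEq .. ▸ hpair
      by_cases hlf : fl = gl
      · have hrf : fr ≠ gr := by
          intro hrr
          apply hfg
          funext i
          by_cases hi : i.1 < 2 ^ D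
          · have := congrFun hlf ⟨i.1, hi⟩
            simpa [hfl, hgl] using this
          · have hi2 : i.1 - 2 ^ D < 2 ^ D := by have := i.2; omega
            have := congrFun hrr ⟨i.1 - 2 ^ D, hi2⟩
            simp only [hfr, hgr] at this
            have he : (⟨2 ^ D + (i.1 - 2 ^ D), by omega⟩ : Fin (2 ^ (D+1))) = i := by
              ext; simp; omega
            rwa [he] at this
        exact ih fr gr hrf hR
      · exact ih fl gl hlf hL
    · exact ⟨_, _, _, _, hpair, hroot⟩
end
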